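/- Let m ≥ 4 be an even natural number. Consider the ℚ-vector space with basis w, ζ_0, …, ζ_{m+2} equipped with the symmetric bilinear form ⟨·,·⟩ determined by: ⟨w,w⟩ = 4; ⟨w,ζ_i⟩ = 1 for all 0 ≤ i ≤ m+2; ⟨ζ_i,ζ_i⟩ = (−1)^{m/2}(⌊m/4⌋+1) for all i; and ⟨ζ_i,ζ_j⟩ = (−1)^{m/2−2}(⌊(m/2−2)/2⌋+1) for all i ≠ j. Define ζ := ((m/2+1)/(m+1))·w − (1/(m+1))·∑_{i=0}^{m+2} ζ_i and ζ_{−1} := 2ζ − w. Then the determinant of the (m+4)×(m+4) Gram matrix (⟨ζ_a, ζ_b⟩)_{a,b ∈ {−1,0,1,…,m+2}} equals (−1)^{m+3} if m ≡ 2 (mod 4), and equals 1 if m ≡ 0 (mod 4). -/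

import Mathlib

open Matrix

def padded (n : ℕ) (e f a b : ℚ) : Matrix (Option (Fin n)) (Option (Fin n)) ℚ :=
  Matrix.of fun p q =>
    match p, q with
    | none, none => e
    | none, some _ => f
    | some _, none => f
    | some i, some j => if i = j then a else b

lemma padded_decomp (n : ℕ) (e f a b : ℚ) (hs : (a - b) * (a - b) = 1) :
    padded n e f a b =
      (a - b) • (1 + (Matrix.of (fun (p : Option (Fin n)) (j : Fin 2) =>
          if j = 0 then (if p = none then (1:ℚ) else 0) else 1)) *
        (((a - b) • (!![e + 2*b - a - 2*f, f - b; f - b, b] : Matrix (Fin 2) (Fin 2) ℚ)) *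
          (Matrix.of (fun (p : Option (Fin n)) (j : Fin 2) =>
          if j = 0 then (if p = none then (1:ℚ) else 0) else 1))ᵀ)) := by
  set A : Matrix (Option (Fin n)) (Fin 2) ℚ :=
    Matrix.of (fun p j => if j = 0 then (if p = none then (1:ℚ) else 0) else 1) with hA
  set W : Matrix (Fin 2) (Fin 2) ℚ := !![e + 2*b - a - 2*f, f - b; f - b, b] with hW
  ext p q
  have key : (A * (((a-b) • W) * Aᵀ)) p q =
      ∑ j : Fin 2, ∑ k : Fin 2, A p j * ((a-b) * W j k) * A q k := by
    simp only [Matrix.mul_apply, Matrix.transpose_apply, Matrix.smul_apply,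
      Fin.sum_univ_two, smul_eq_mul]
    ring
  rcases p with _ | i <;> rcases q with _ | j
  · simp only [padded, Matrix.smul_apply, Matrix.add_apply, Matrix.one_apply,
      Matrix.of_apply, key, Fin.sum_univ_two]
    simp only [hA, hW, Matrix.of_apply]
    simp only [reduceCtorEq, if_false, if_true]
    norm_num
    linear_combination (a - b - e) * hs
  · simp only [padded, Matrix.smul_apply, Matrix.add_apply, Matrix.one_apply,
      Matrix.of_apply, key, Fin.sum_univ_two]
    simp only [hA, hW, Matrix.of_apply]
    simp only [reduceCtorEq, if_false, if_true]
    norm_num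
    linear_combination (-f) * hs
  · simp only [padded, Matrix.smul_apply, Matrix.add_apply, Matrix.one_apply,
      Matrix.of_apply, key, Fin.sum_univ_two]
    simp only [hA, hW, Matrix.of_apply]
    simp only [reduceCtorEq, if_false, if_true]
    norm_num
    linear_combination (-f) * hs
  · simp only [padded, Matrix.smul_apply, Matrix.add_apply, Matrix.one_apply,
      Matrix.of_apply, key, Fin.sum_univ_two]
    simp only [hA, hW, Matrix.of_apply]
    simp only [reduceCtorEq, if_false, if_true]
    norm_num
    rcases eq_or_ne i j with h | h
    · simp [h]
      linear_combination (-b) * hs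
    · simp [h, Fin.val_injective.ne h]
      linear_combination (-b) * hs

lemma padded_det (n : ℕ) (e f a b : ℚ) (hs : (a - b) * (a - b) = 1) :
    (padded n e f a b).det
      = (a - b) ^ (n + 1) * ((a + ((n : ℚ) - 1) * b) * e - (n : ℚ) * f ^ 2) := by
  set A : Matrix (Option (Fin n)) (Fin 2) ℚ :=
    Matrix.of (fun p j => if j = 0 then (if p = none then (1:ℚ) else 0) else 1) with hA
  set W : Matrix (Fin 2) (Fin 2) ℚ := !![e + 2*b - a - 2*f, f - b; f - b, b] with hW
  have hAA : Aᵀ * A = !![(1:ℚ), 1; 1, (n:ℚ)+1] := by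
    ext i j
    fin_cases i <;> fin_cases j <;>
      simp [hA, Matrix.mul_apply, Matrix.transpose_apply, Fintype.sum_option,
        Finset.card_univ]
  have h2 : (1 + ((a - b) • W) * (Aᵀ * A)).det
      = (a + ((n : ℚ) - 1) * b) * e - (n : ℚ) * f ^ 2 := by
    rw [hAA, hW]
    simp [Matrix.det_fin_two, Matrix.mul_apply, Fin.sum_univ_two, Matrix.one_apply]
    linear_combination ((n:ℚ)*(e*b - f^2) - 1 - (a-b)*(n:ℚ)*b) * hs
  rw [padded_decomp n e f a b hs]
  rw [Matrix.det_smul, Matrix.det_one_add_mul_comm, Matrix.mul_assoc, ← hA, ← hW]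
  rw [h2]
  simp [Fintype.card_option]

/-- Determinant of the Gram matrix of `ζ_{-1} = 2ζ - ω^{m/2}, ζ_0, …, ζ_{m+2}`
in the middle cohomology of an even-dimensional complete intersection of two
quadrics, with the intersection numbers of Reid's basis. -/
theorem gram_det_two_quadrics (m : ℕ) (hm : Even m) (h4 : 4 ≤ m)
    {V : Type*} [AddCommGroup V] [Module ℚ V]
    (B : V →ₗ[ℚ] V →ₗ[ℚ] ℚ) (hBsymm : ∀ x y, B x y = B y x)
    (w : V) (z : Fin (m + 3) → V)
    (hww : B w w = 4)
    (hwz : ∀ i, B w (z i) = 1)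
    (hzw : ∀ i, B (z i) w = 1)
    (hzz : ∀ i, B (z i) (z i) = (-1 : ℚ) ^ (m / 2) * (m / 4 + 1 : ℕ))
    (hzz' : ∀ i j, i ≠ j →
      B (z i) (z j) = (-1 : ℚ) ^ (m / 2 - 2) * ((m / 2 - 2) / 2 + 1 : ℕ)) :
    letI zeta : V := (((m : ℚ) / 2 + 1) / ((m : ℚ) + 1)) • w
      - (1 / ((m : ℚ) + 1)) • ∑ i : Fin (m + 3), z i
    letI v : Option (Fin (m + 3)) → V :=
      fun a => Option.elim a ((2 : ℚ) • zeta - w) z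
    letI G : Matrix (Option (Fin (m + 3))) (Option (Fin (m + 3))) ℚ :=
      Matrix.of fun a b => B (v a) (v b)
    (m % 4 = 2 → G.det = (-1 : ℚ) ^ (m + 3)) ∧ (m % 4 = 0 → G.det = 1) := by
  have hm2 : m % 2 = 0 := Nat.even_iff.mp hm
  set a : ℚ := (-1 : ℚ) ^ (m / 2) * (m / 4 + 1 : ℕ) with ha
  set b : ℚ := (-1 : ℚ) ^ (m / 2 - 2) * ((m / 2 - 2) / 2 + 1 : ℕ) with hb
  set c : ℚ := ((m : ℚ) / 2 + 1) / ((m : ℚ) + 1) with hc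
  set d : ℚ := 1 / ((m : ℚ) + 1) with hd
  set E : ℚ := 4*(4*c^2 - 2*c*d*((m:ℚ)+3) + d^2*(((m:ℚ)+3)*(a + ((m:ℚ)+2)*b)))
      - 4*(4*c - d*((m:ℚ)+3)) + 4 with hE
  set F : ℚ := 2*(c - d*(a + ((m:ℚ)+2)*b)) - 1 with hF
  -- basic sum computations
  have hBiS : ∀ i, B (z i) (∑ j : Fin (m+3), z j) = a + ((m:ℚ)+2) * b := by
    intro i
    rw [map_sum, ← Finset.add_sum_erase _ _ (Finset.mem_univ i), hzz i]
    have h1 : ∑ j ∈ Finset.univ.erase i, B (z i) (z j)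
        = ∑ j ∈ Finset.univ.erase i, b :=
      Finset.sum_congr rfl fun j hj => hzz' i j (Finset.ne_of_mem_erase hj).symm
    rw [h1, Finset.sum_const, Finset.card_erase_of_mem (Finset.mem_univ i),
      Finset.card_univ, Fintype.card_fin, nsmul_eq_mul]
    push_cast
    ring
  have hBSi : ∀ i, B (∑ j : Fin (m+3), z j) (z i) = a + ((m:ℚ)+2) * b := by
    intro i
    rw [hBsymm]
    exact hBiS i
  have hBwS : B w (∑ i : Fin (m+3), z i) = (m:ℚ) + 3 := by
    rw [map_sum]
    simp only [hwz]
    rw [Finset.sum_const, Finset.card_univ, Fintype.card_fin, nsmul_eq_mul]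
    push_cast
    ring
  have hBSw : B (∑ i : Fin (m+3), z i) w = (m:ℚ) + 3 := by
    rw [hBsymm]
    exact hBwS
  have hBSS : B (∑ i : Fin (m+3), z i) (∑ j : Fin (m+3), z j)
      = ((m:ℚ)+3) * (a + ((m:ℚ)+2) * b) := by
    rw [map_sum]
    simp only [hBSi]
    rw [Finset.sum_const, Finset.card_univ, Fintype.card_fin, nsmul_eq_mul]
    push_cast
    ring
  -- a - b
  have hpow : (-1 : ℚ) ^ (m / 2 - 2) = (-1 : ℚ) ^ (m / 2) := by
    have h : m / 2 = (m / 2 - 2) + 2 := by omega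
    rw [h, pow_add]
    norm_num
  have hnat : m / 4 + 1 = ((m / 2 - 2) / 2 + 1) + 1 := by omega
  have hab : a - b = (-1 : ℚ) ^ (m / 2) := by
    rw [ha, hb, hpow, hnat]
    push_cast
    ring
  have hs : (a - b) * (a - b) = 1 := by
    rw [hab, ← pow_add]
    exact Even.neg_one_pow ⟨m / 2, rfl⟩
  have hab4 : (a - b) ^ (m + 3 + 1) = 1 := by
    obtain ⟨t, ht⟩ : ∃ t, m = 2 * t := ⟨m / 2, by omega⟩
    have : m + 3 + 1 = 2 * (t + 2) := by omega
    rw [this, pow_mul, pow_two, hs, one_pow]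
  beta_reduce
  have hG : (Matrix.of fun p q : Option (Fin (m+3)) =>
      B (Option.elim p ((2:ℚ) • (c • w - d • ∑ i : Fin (m + 3), z i) - w) z)
        (Option.elim q ((2:ℚ) • (c • w - d • ∑ i : Fin (m + 3), z i) - w) z))
      = padded (m+3) E F a b := by
    ext p q
    rcases p with _ | i <;> rcases q with _ | j
    · show B ((2:ℚ) • (c • w - d • ∑ i : Fin (m+3), z i) - w)
        ((2:ℚ) • (c • w - d • ∑ i : Fin (m+3), z i) - w) = E
      simp only [map_sub, _root_.map_smul, LinearMap.sub_apply, LinearMap.smul_apply,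
        smul_eq_mul, hww, hBwS, hBSw, hBSS]
      rw [hE]
      ring
    · show B ((2:ℚ) • (c • w - d • ∑ i : Fin (m+3), z i) - w) (z j) = F
      simp only [map_sub, _root_.map_smul, LinearMap.sub_apply, LinearMap.smul_apply,
        smul_eq_mul, hwz, hBSi]
      rw [hF]
      ring
    · show B (z i) ((2:ℚ) • (c • w - d • ∑ i : Fin (m+3), z i) - w) = F
      simp only [map_sub, _root_.map_smul, LinearMap.sub_apply, LinearMap.smul_apply,
        smul_eq_mul, hzw, hBiS]
      rw [hF]
      ring
    · show B (z i) (z j) = if i = j then a else b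
      rcases eq_or_ne i j with h | h
      · rw [if_pos h, h]
        exact hzz j
      · rw [if_neg h]
        exact hzz' i j h
  rw [hG, padded_det _ _ _ _ _ hs, hab4, one_mul]
  have hm1 : ((m:ℚ) + 1) ≠ 0 := by positivity
  constructor
  · intro hmod
    obtain ⟨k, hk⟩ : ∃ k, m = 4 * k + 2 := ⟨m / 4, by omega⟩
    have hk1 : 1 ≤ k := by omega
    have e1 : m / 2 = 2 * (k - 1) + 1 + 2 := by omega
    have e2 : m / 4 + 1 = k + 2 - 1 := by omega
    have e3 : (m / 2 - 2) / 2 + 1 = k := by omega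
    have hsgn : (-1 : ℚ) ^ (m / 2) = -1 := by
      rw [e1, pow_add, pow_succ, pow_mul]
      norm_num
    have ha' : a = -((k:ℚ) + 1) := by
      rw [ha, hsgn, e2]
      push_cast [hk1]
      ring
    have hb' : b = -(k:ℚ) := by
      rw [hb, hpow, hsgn, e3]
      ring
    have hrhs : (-1 : ℚ) ^ (m + 3) = -1 := by
      have : m + 3 = 2 * (2 * k + 2) + 1 := by omega
      rw [this, pow_succ, pow_mul]
      norm_num
    rw [hrhs, hE, hF, hc, hd, ha', hb', hk]
    have hm1' : (4 * (k:ℚ) + 2 + 1) ≠ 0 := by positivity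
    push_cast
    field_simp
    ring
  · intro hmod
    obtain ⟨k, hk⟩ : ∃ k, m = 4 * k := ⟨m / 4, by omega⟩
    have hk1 : 1 ≤ k := by omega
    have e1 : m / 2 = 2 * k := by omega
    have e2 : m / 4 + 1 = k + 1 := by omega
    have e3 : (m / 2 - 2) / 2 + 1 = k := by omega
    have hsgn : (-1 : ℚ) ^ (m / 2) = 1 := by
      rw [e1, pow_mul]
      norm_num
    have ha' : a = (k:ℚ) + 1 := by
      rw [ha, hsgn, e2]
      push_cast
      ring
    have hb' : b = (k:ℚ) := by
      rw [hb, hpow, hsgn, e3]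
      ring
    rw [hE, hF, hc, hd, ha', hb', hk]
    have hm1' : (4 * (k:ℚ) + 1) ≠ 0 := by positivity
    push_cast
    field_simp
    ring
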